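/- arXiv:2304.06366 — 3 statements merged into one kernel-verified Lean document; each statement's English description precedes it below -/
import Mathlib

section
/- Exact marginalization preserves the joint distribution of remaining variables: let ST be a clique tree (a tree of cliques with sepsets on edges) whose calibrated beliefs represent the distribution P_ST = (∏_{C ∈ ST} β(C)) / (∏_{S ∈ ST} μ(S)), and let v be a variable contained only in cliques of a subtree. If all cliques containing v are collapsed into one clique with belief equal to the marginal over D_v of the joint distribution of that subtree (Equation for β(C_c)), then the resulting structure represents Σ_{D_v} P_ST, the exact marginal of the original distribution over the remaining variables. -/
open Finset

/-- exact marginalization preserves the joint distribution of the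
remaining variables.

A clique tree is encoded in rooted form: cliques are indexed by `ι` with a
distinguished `root` and a `parent` map; for each non-root index `i`, the edge
`(i, parent i)` carries sepset belief `μ i`.  The represented distribution is
`P x = (∏ i, β i x) / (∏ i ≠ root, μ i x)`.

The variable `v` occurs only in the cliques of a subtree `T` (so beliefs of
cliques outside `T`, and sepset beliefs of edges not internal to `T`, do not
depend on the value of `v`).  Collapsing all cliques of `T` into one clique
whose belief is the marginal over `D v` of the joint distribution of the
subtree (`βc` below) yields a structure representing exactly `Σ_{D_v} P`. -/
theorem exactMarg_preserves_distribution
    {V : Type*} [DecidableEq V] {D : V → Type*} [∀ u, Fintype (D u)]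
    [∀ u, DecidableEq (D u)]
    {ι : Type*} [Fintype ι] [DecidableEq ι]
    (root : ι) (parent : ι → ι)
    (β μ : ι → (∀ u, D u) → ℝ)
    (v : V) (T : Finset ι)
    -- beliefs of cliques outside the subtree `T` do not depend on `v`
    (hout : ∀ i ∉ T, ∀ x d, β i (Function.update x v d) = β i x)
    -- sepset beliefs of edges not internal to `T` do not depend on `v`
    (hext : ∀ i ∈ Finset.univ.erase root, ¬(i ∈ T ∧ parent i ∈ T) →
        ∀ x d, μ i (Function.update x v d) = μ i x)
    -- represented distribution of the original clique tree
    (P : (∀ u, D u) → ℝ)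
    (hP : ∀ x, P x = (∏ i, β i x) / (∏ i ∈ Finset.univ.erase root, μ i x))
    -- belief of the collapsed clique: marginal over `D v` of the subtree's joint
    (βc : (∀ u, D u) → ℝ)
    (hβc : ∀ x, βc x = ∑ d : D v,
        (∏ i ∈ T, β i (Function.update x v d)) /
          (∏ i ∈ (Finset.univ.erase root).filter (fun i => i ∈ T ∧ parent i ∈ T),
              μ i (Function.update x v d))) :
    ∀ x, βc x * (∏ i ∈ Tᶜ, β i x) /
        (∏ i ∈ (Finset.univ.erase root).filter (fun i => ¬(i ∈ T ∧ parent i ∈ T)),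
            μ i x)
      = ∑ d : D v, P (Function.update x v d) := by
  intro x
  have hsplitβ : ∀ d, (∏ i, β i (Function.update x v d))
      = (∏ i ∈ T, β i (Function.update x v d)) * ∏ i ∈ Tᶜ, β i x := by
    intro d
    rw [← Finset.prod_mul_prod_compl T]
    congr 1
    exact Finset.prod_congr rfl fun i hi => hout i (by simpa using hi) x d
  have hsplitμ : ∀ d, (∏ i ∈ Finset.univ.erase root, μ i (Function.update x v d))
      = (∏ i ∈ (Finset.univ.erase root).filter (fun i => i ∈ T ∧ parent i ∈ T),
            μ i (Function.update x v d))
        * ∏ i ∈ (Finset.univ.erase root).filter (fun i => ¬(i ∈ T ∧ parent i ∈ T)),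
            μ i x := by
    intro d
    rw [← Finset.prod_filter_mul_prod_filter_not (Finset.univ.erase root)
        (fun i => i ∈ T ∧ parent i ∈ T)]
    congr 1
    refine Finset.prod_congr rfl fun i hi => ?_
    simp only [Finset.mem_filter] at hi
    exact hext i hi.1 hi.2 x d
  simp only [hP, hsplitβ, hsplitμ, hβc]
  rw [mul_div_assoc, Finset.sum_mul]
  refine Finset.sum_congr rfl fun d _ => ?_
  rw [div_mul_div_comm]
end

section
/- In a calibrated clique tree over two adjacent cliques C_1, C_2 with sepset S, the represented distribution β(C_1)·β(C_2)/μ(S) marginalizes onto C_1 to give exactly β(C_1). -/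
/-- Override a full assignment `x` on the variables in the finite set `A`
by the partial assignment `g`. -/
noncomputable def override {V : Type*} [DecidableEq V] {D : V → Type*}
    (A : Finset V) (x : ∀ v, D v) (g : ∀ v : A, D v) : ∀ v, D v :=
  fun v => if h : v ∈ A then g ⟨v, h⟩ else x v

/-- Marginalize (sum) a function `f` of assignments over all assignments to the
variables in the finite set `A`; the result is a function of the remaining variables. -/
noncomputable def margOver {V : Type*} [DecidableEq V] {D : V → Type*}
    [∀ v, Fintype (D v)] (A : Finset V) (f : (∀ v, D v) → ℝ) (x : ∀ v, D v) : ℝ :=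
  ∑ g : ∀ v : A, D v, f (override A x g)

/-- in a calibrated clique tree with two adjacent cliques `C₁, C₂`
and sepset `S = C₁ ∩ C₂`, the represented distribution
`P = β₁ · β₂ / μ` marginalizes onto `C₁` to give exactly `β₁`. -/
theorem two_clique_marginal {V : Type*} [DecidableEq V] {D : V → Type*}
    [∀ u, Fintype (D u)]
    (C₁ C₂ : Finset V)
    (β₁ β₂ μ : (∀ u, D u) → ℝ)
    -- beliefs depend only on the variables of their cliques / sepset
    (hdep₁ : ∀ x y, (∀ u ∈ C₁, x u = y u) → β₁ x = β₁ y)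
    (hdep₂ : ∀ x y, (∀ u ∈ C₂, x u = y u) → β₂ x = β₂ y)
    (hdepμ : ∀ x y, (∀ u ∈ C₁ ∩ C₂, x u = y u) → μ x = μ y)
    -- nonnegativity of beliefs and positivity of the sepset belief
    (hβ₁ : ∀ x, 0 ≤ β₁ x) (hβ₂ : ∀ x, 0 ≤ β₂ x) (hμpos : ∀ x, 0 < μ x)
    -- calibration: both cliques marginalize onto the sepset to `μ`
    (hcal₁ : ∀ x, margOver (C₁ \ (C₁ ∩ C₂)) β₁ x = μ x)
    (hcal₂ : ∀ x, margOver (C₂ \ (C₁ ∩ C₂)) β₂ x = μ x)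
    -- represented distribution
    (P : (∀ u, D u) → ℝ)
    (hP : ∀ x, P x = β₁ x * β₂ x / μ x) :
    ∀ x, margOver (C₂ \ C₁) P x = β₁ x := by
  intro x
  have hset : C₂ \ (C₁ ∩ C₂) = C₂ \ C₁ := by
    ext u
    simp only [Finset.mem_sdiff, Finset.mem_inter]
    tauto
  have hcal := hcal₂ x
  rw [hset] at hcal
  have hfix : ∀ (g : ∀ v : (C₂ \ C₁ : Finset V), D v) u, u ∈ C₁ →
      override (C₂ \ C₁) x g u = x u := by
    intro g u hu
    unfold override
    rw [dif_neg]
    simp only [Finset.mem_sdiff]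
    tauto
  have hβfix : ∀ g : ∀ v : (C₂ \ C₁ : Finset V), D v,
      β₁ (override (C₂ \ C₁) x g) = β₁ x := fun g => hdep₁ _ _ (hfix g)
  have hμfix : ∀ g : ∀ v : (C₂ \ C₁ : Finset V), D v,
      μ (override (C₂ \ C₁) x g) = μ x := by
    intro g
    exact hdepμ _ _ (fun u hu => hfix g u (Finset.mem_inter.mp hu).1)
  unfold margOver at hcal ⊢
  calc (∑ g : ∀ v : (C₂ \ C₁ : Finset V), D v, P (override (C₂ \ C₁) x g))
      = ∑ g : ∀ v : (C₂ \ C₁ : Finset V), D v,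
        β₁ x / μ x * β₂ (override (C₂ \ C₁) x g) := by
        apply Finset.sum_congr rfl
        intro g _
        rw [hP, hβfix, hμfix]
        ring
    _ = β₁ x / μ x * μ x := by rw [← Finset.mul_sum, hcal]
    _ = β₁ x := div_mul_cancel₀ _ (ne_of_gt (hμpos x))
end

section
/- Local marginalization preserves calibration along a whole path: if v appears in a connected path of cliques C_1—C_2—…—C_n of a calibrated clique tree with v in every sepset along the path, then marginalizing v out of every clique and sepset on the path yields beliefs that are still calibrated on every edge of the path. -/
lemma override_comm {V : Type*} [DecidableEq V] {D : V → Type*}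
    (A B : Finset V) (hd : Disjoint A B) (x : ∀ v, D v)
    (g : ∀ v : A, D v) (h : ∀ v : B, D v) :
    override B (override A x g) h = override A (override B x h) g := by
  funext u
  by_cases hA : u ∈ A
  · have hB : u ∉ B := Finset.disjoint_left.mp hd hA
    simp [override, hA, hB]
  · by_cases hB : u ∈ B <;> simp [override, hA, hB]

lemma margOver_comm {V : Type*} [DecidableEq V] {D : V → Type*}
    [∀ v, Fintype (D v)] (A B : Finset V) (hd : Disjoint A B)
    (f : (∀ v, D v) → ℝ) (x : ∀ v, D v) :
    margOver A (margOver B f) x = margOver B (margOver A f) x := by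
  unfold margOver
  rw [Finset.sum_comm]
  refine Finset.sum_congr rfl fun h _ => Finset.sum_congr rfl fun g _ => ?_
  rw [override_comm A B hd]

lemma erase_sdiff_erase {V : Type*} [DecidableEq V] (C S : Finset V) (v : V)
    (hv : v ∈ S) : C.erase v \ S.erase v = C \ S := by
  ext a
  simp only [Finset.mem_sdiff, Finset.mem_erase]
  constructor
  · rintro ⟨⟨hne, hC⟩, h2⟩
    exact ⟨hC, fun hs => h2 ⟨hne, hs⟩⟩
  · rintro ⟨hC, hS⟩
    exact ⟨⟨fun he => hS (he ▸ hv), hC⟩, fun h => hS h.2⟩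

/-- local marginalization preserves calibration along a whole
path.  The path of cliques is `C 0 — C 1 — ⋯ — C n`, where the edge between
`C i` and `C (i+1)` has sepset `S i` with sepset belief `μ i`.  If `v` lies in
every sepset along the path and each edge is calibrated, then after
marginalizing `v` out of every clique and sepset on the path, every edge of the
path is still calibrated. -/
theorem localMarg_calibration_path {V : Type*} [DecidableEq V] {D : V → Type*}
    [∀ u, Fintype (D u)]
    (n : ℕ)
    (C : Fin (n + 1) → Finset V) (S : Fin n → Finset V)
    (β : Fin (n + 1) → (∀ u, D u) → ℝ) (μ : Fin n → (∀ u, D u) → ℝ)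
    (v : V)
    (hS : ∀ i : Fin n, S i ⊆ C i.castSucc ∩ C i.succ)
    -- `v` lies in every sepset along the path (hence in every clique)
    (hv : ∀ i : Fin n, v ∈ S i)
    -- calibration of every edge of the path
    (hcal₁ : ∀ i : Fin n, ∀ x, margOver (C i.castSucc \ S i) (β i.castSucc) x = μ i x)
    (hcal₂ : ∀ i : Fin n, ∀ x, margOver (C i.succ \ S i) (β i.succ) x = μ i x) :
    -- after local marginalization of `v`, every edge is still calibrated
    (∀ i : Fin n, ∀ x,
        margOver ((C i.castSucc).erase v \ (S i).erase v)
            (margOver {v} (β i.castSucc)) x = margOver {v} (μ i) x) ∧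
    (∀ i : Fin n, ∀ x,
        margOver ((C i.succ).erase v \ (S i).erase v)
            (margOver {v} (β i.succ)) x = margOver {v} (μ i) x) := by
  have key : ∀ (A : Finset V) (f g : (∀ u, D u) → ℝ),
      v ∉ A → (∀ x, margOver A f x = g x) →
      ∀ x, margOver A (margOver {v} f) x = margOver {v} g x := by
    intro A f g hvA hcal x
    rw [margOver_comm A {v} (by simpa using hvA)]
    unfold margOver
    exact Finset.sum_congr rfl fun h _ => hcal _
  constructor
  · intro i x
    rw [erase_sdiff_erase _ _ _ (hv i)]
    exact key _ _ _ (by simp [hv i]) (hcal₁ i) x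
  · intro i x
    rw [erase_sdiff_erase _ _ _ (hv i)]
    exact key _ _ _ (by simp [hv i]) (hcal₂ i) x
end
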